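/- Fix α > 0, ε ∈ (0,1), κ ∈ (0, 1−ε), n ∈ ℕ, and η ∈ ℝ. On the triangle T = {(h,u) : ε ≤ u ≤ h ≤ 1−κ} there exists a constant C > 0 such that |K_n(η; h, u)| ≤ C for all (h,u) ∈ T, the function h ↦ K_n(η; h, u) is differentiable on [u, 1−κ] for each fixed u ∈ [ε, 1−κ], and |∂K_n/∂h (η; h, u)| ≤ C for all (h,u) ∈ T. -/

import Mathlib

open MeasureTheory Real Polynomial

/-- `p(h) = (α² + h²)/(2h)`. -/
noncomputable def pRad (α h : ℝ) : ℝ := (α ^ 2 + h ^ 2) / (2 * h)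

/-- `R(h) = p(h) - h`. -/
noncomputable def RRad (α h : ℝ) : ℝ := pRad α h - h

/-- The Volterra kernel `K_n(η; h, u)`, defined as an integral over `v ∈ (0,1)`,
with `t = u + v(h - u)`. -/
noncomputable def volterraK (α : ℝ) (n : ℕ) (η h u : ℝ) : ℝ :=
  2 * (1 - u) * ∫ v in Set.Ioo (0 : ℝ) 1,
    ((u + v * (h - u)) * ((u + v * (h - u)) + RRad α h) *
        Real.cos (η * Real.sqrt (pRad α h ^ 2 - ((u + v * (h - u)) + RRad α h) ^ 2)) *
        (Chebyshev.T ℝ (n : ℤ)).eval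
          (((1 - u) ^ 2 + 1 - (u + v * (h - u)) ^ 2) / (2 * (1 - u)))) /
      (Real.sqrt v * Real.sqrt (1 - v) *
        Real.sqrt (pRad α h + (u + v * (h - u)) + RRad α h) *
        Real.sqrt ((u + v * (h - u)) + u) *
        Real.sqrt (2 + (u + v * (h - u)) - u) *
        Real.sqrt (2 - (u + v * (h - u)) - u))

/-! ### Auxiliary definitions -/

noncomputable def cosDer (η y : ℝ) : ℝ :=
  if y = 0 then -η ^ 2 / 2 else -(η * Real.sin (η * Real.sqrt y)) / (2 * Real.sqrt y)

noncomputable def tE (u h v : ℝ) : ℝ := u + v * (h - u)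
noncomputable def pd (α h : ℝ) : ℝ := (h ^ 2 - α ^ 2) / (2 * h ^ 2)
noncomputable def xE (α u h v : ℝ) : ℝ := pRad α h ^ 2 - (tE u h v + RRad α h) ^ 2
noncomputable def xdE (α u h v : ℝ) : ℝ :=
  2 * pRad α h * pd α h - 2 * (tE u h v + RRad α h) * (v + (pd α h - 1))
noncomputable def cE (α η u h v : ℝ) : ℝ := Real.cos (η * Real.sqrt (xE α u h v))
noncomputable def cdE (α η u h v : ℝ) : ℝ := cosDer η (xE α u h v) * xdE α u h v
noncomputable def aE (u h v : ℝ) : ℝ := ((1 - u) ^ 2 + 1 - tE u h v ^ 2) / (2 * (1 - u))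
noncomputable def adE (u h v : ℝ) : ℝ := -(2 * tE u h v * v) / (2 * (1 - u))
noncomputable def TEv (n : ℕ) (u h v : ℝ) : ℝ := (Chebyshev.T ℝ (n : ℤ)).eval (aE u h v)
noncomputable def TdE (n : ℕ) (u h v : ℝ) : ℝ :=
  (Polynomial.derivative (Chebyshev.T ℝ (n : ℤ))).eval (aE u h v) * adE u h v
noncomputable def NE (α η : ℝ) (n : ℕ) (u h v : ℝ) : ℝ :=
  tE u h v * (tE u h v + RRad α h) * cE α η u h v * TEv n u h v
noncomputable def NdE (α η : ℝ) (n : ℕ) (u h v : ℝ) : ℝ :=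
  v * (tE u h v + RRad α h) * cE α η u h v * TEv n u h v
  + tE u h v * (v + (pd α h - 1)) * cE α η u h v * TEv n u h v
  + tE u h v * (tE u h v + RRad α h) * cdE α η u h v * TEv n u h v
  + tE u h v * (tE u h v + RRad α h) * cE α η u h v * TdE n u h v
noncomputable def s1E (α u h v : ℝ) : ℝ := Real.sqrt (pRad α h + tE u h v + RRad α h)
noncomputable def s2E (u h v : ℝ) : ℝ := Real.sqrt (tE u h v + u)
noncomputable def s3E (u h v : ℝ) : ℝ := Real.sqrt (2 + tE u h v - u)
noncomputable def s4E (u h v : ℝ) : ℝ := Real.sqrt (2 - tE u h v - u)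
noncomputable def s1dE (α u h v : ℝ) : ℝ := (pd α h + v + (pd α h - 1)) / (2 * s1E α u h v)
noncomputable def s2dE (u h v : ℝ) : ℝ := v / (2 * s2E u h v)
noncomputable def s3dE (u h v : ℝ) : ℝ := v / (2 * s3E u h v)
noncomputable def s4dE (u h v : ℝ) : ℝ := -v / (2 * s4E u h v)
noncomputable def DE (α u h v : ℝ) : ℝ := s1E α u h v * s2E u h v * s3E u h v * s4E u h v
noncomputable def DdE (α u h v : ℝ) : ℝ :=
  s1dE α u h v * s2E u h v * s3E u h v * s4E u h v
  + s1E α u h v * s2dE u h v * s3E u h v * s4E u h v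
  + s1E α u h v * s2E u h v * s3dE u h v * s4E u h v
  + s1E α u h v * s2E u h v * s3E u h v * s4dE u h v
noncomputable def GE (α η : ℝ) (n : ℕ) (u h v : ℝ) : ℝ := NE α η n u h v / DE α u h v
noncomputable def GdE (α η : ℝ) (n : ℕ) (u h v : ℝ) : ℝ :=
  (NdE α η n u h v * DE α u h v - NE α η n u h v * DdE α u h v) / DE α u h v ^ 2
noncomputable def wE (v : ℝ) : ℝ := (Real.sqrt v * Real.sqrt (1 - v))⁻¹

/-! ### The derivative of `cos (η √·)` on `[0, ∞)` -/

lemma cos_sub_one_eq (A : ℝ) : Real.cos A - 1 = -2 * Real.sin (A / 2) ^ 2 := by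
  have h := Real.cos_two_mul (A / 2)
  rw [show 2 * (A / 2) = A by ring] at h
  nlinarith [Real.sin_sq_add_cos_sq (A / 2)]

lemma tendsto_sin_div_self :
    Filter.Tendsto (fun w : ℝ => Real.sin w / w) (nhdsWithin 0 {0}ᶜ) (nhds 1) := by
  have h := (Real.hasDerivAt_sin 0)
  rw [hasDerivAt_iff_tendsto_slope] at h
  simp only [Real.cos_zero] at h
  refine h.congr (fun w => ?_)
  simp [slope_fun_def, Real.sin_zero, div_eq_inv_mul]

lemma tendsto_sin_mul_sqrt {η : ℝ} (hη : η ≠ 0) :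
    Filter.Tendsto (fun y : ℝ => Real.sin (η * Real.sqrt y) / (η * Real.sqrt y))
      (nhdsWithin 0 (Set.Ioi 0)) (nhds 1) := by
  have hmap : Filter.Tendsto (fun y : ℝ => η * Real.sqrt y) (nhdsWithin 0 (Set.Ioi 0))
      (nhdsWithin 0 {0}ᶜ) := by
    apply tendsto_nhdsWithin_of_tendsto_nhds_of_eventually_within
    · have : Filter.Tendsto (fun y : ℝ => η * Real.sqrt y) (nhds 0) (nhds (η * Real.sqrt 0)) :=
        Real.continuous_sqrt.continuousAt.const_mul η
      simpa using this.mono_left nhdsWithin_le_nhds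
    · filter_upwards [self_mem_nhdsWithin] with y hy
      exact mul_ne_zero hη (Real.sqrt_pos.mpr hy).ne'
  exact tendsto_sin_div_self.comp hmap

lemma hasDerivWithinAt_cos_mul_sqrt (η : ℝ) {y : ℝ} (hy : 0 ≤ y) :
    HasDerivWithinAt (fun z => Real.cos (η * Real.sqrt z)) (cosDer η y) (Set.Ici 0) y := by
  rcases eq_or_lt_of_le hy with rfl | hy'
  · by_cases hη : η = 0
    · simp only [hη, zero_mul, Real.cos_zero]
      have : cosDer 0 0 = 0 := by norm_num [cosDer]
      rw [this]
      exact hasDerivWithinAt_const 0 _ 1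
    · rw [hasDerivWithinAt_iff_tendsto_slope, Set.Ici_sdiff_left]
      have hg : Filter.Tendsto
          (fun y : ℝ => -(η ^ 2 / 2) * (Real.sin (η / 2 * Real.sqrt y) / (η / 2 * Real.sqrt y)) ^ 2)
          (nhdsWithin 0 (Set.Ioi 0)) (nhds (cosDer η 0)) := by
        have h2 : (η / 2 : ℝ) ≠ 0 := by simpa using hη
        have := ((tendsto_sin_mul_sqrt h2).pow 2).const_mul (-(η ^ 2 / 2))
        simp only [one_pow, mul_one] at this
        convert this using 2
        rw [cosDer, if_pos rfl]; ring
      refine hg.congr' ?_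
      filter_upwards [self_mem_nhdsWithin] with z hz
      have hz' : (0:ℝ) < z := hz
      have hs0 : Real.sqrt z ≠ 0 := (Real.sqrt_pos.mpr hz').ne'
      have hsq : Real.sqrt z ^ 2 = z := Real.sq_sqrt hz'.le
      have hcos : Real.cos (η * Real.sqrt z) - 1 = -2 * Real.sin (η / 2 * Real.sqrt z) ^ 2 := by
        have := cos_sub_one_eq (η * Real.sqrt z)
        rw [show η * Real.sqrt z / 2 = η / 2 * Real.sqrt z by ring] at this
        exact this
      have hslope : slope (fun z => Real.cos (η * Real.sqrt z)) 0 z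
          = (Real.cos (η * Real.sqrt z) - 1) / z := by
        simp [slope_fun_def, div_eq_inv_mul, mul_comm]
      rw [hslope, hcos]
      set s := Real.sqrt z with hsdef
      rw [← hsq]
      field_simp
  · have hs := Real.hasDerivAt_sqrt hy'.ne'
    have h1 := (hs.const_mul η).cos
    have h2 : cosDer η y = -Real.sin (η * Real.sqrt y) * (η * (1 / (2 * Real.sqrt y))) := by
      rw [cosDer, if_neg hy'.ne']
      ring
    rw [h2]
    exact h1.hasDerivWithinAt

lemma continuousOn_cosDer (η : ℝ) : ContinuousOn (cosDer η) (Set.Ici 0) := by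
  by_cases hη : η = 0
  · have : cosDer 0 = fun _ : ℝ => 0 := by
      funext y; by_cases hy : y = 0 <;> simp [cosDer, hy]
    rw [hη, this]
    exact continuousOn_const
  · intro y hy
    rcases eq_or_lt_of_le (Set.mem_Ici.mp hy : (0:ℝ) ≤ y) with rfl | hy'
    · rw [← continuousWithinAt_diff_self, Set.Ici_sdiff_left]
      have h0 : cosDer η 0 = -(η ^ 2 / 2) := by rw [cosDer, if_pos rfl]; ring
      have hg := (tendsto_sin_mul_sqrt hη).const_mul (-(η ^ 2 / 2))
      rw [mul_one] at hg
      have : Filter.Tendsto (cosDer η) (nhdsWithin 0 (Set.Ioi 0)) (nhds (cosDer η 0)) := by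
        rw [h0]
        refine hg.congr' ?_
        filter_upwards [self_mem_nhdsWithin] with z hz
        have hz' : (0:ℝ) < z := hz
        have hs0 : Real.sqrt z ≠ 0 := (Real.sqrt_pos.mpr hz').ne'
        rw [cosDer, if_neg hz'.ne']
        field_simp
      exact this
    · have hformula : ContinuousAt
          (fun z => -(η * Real.sin (η * Real.sqrt z)) / (2 * Real.sqrt z)) y := by
        apply ContinuousAt.div
        · fun_prop
        · fun_prop
        · simpa using (Real.sqrt_pos.mpr hy').ne'
      have hev : (fun z => -(η * Real.sin (η * Real.sqrt z)) / (2 * Real.sqrt z))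
          =ᶠ[nhds y] cosDer η := by
        filter_upwards [eventually_gt_nhds hy'] with z hz
        rw [cosDer, if_neg hz.ne']
      exact (hformula.congr hev).continuousWithinAt

/-! ### A dominated-convergence lemma for derivatives within a set -/

lemma hasDerivWithinAt_integral_of_dominated
    {μ : Measure ℝ} {s : Set ℝ} (hs : Convex ℝ s)
    {F F' : ℝ → ℝ → ℝ} {bound : ℝ → ℝ} {h₀ : ℝ} (h₀s : h₀ ∈ s)
    (hmeas : ∀ h ∈ s, AEStronglyMeasurable (F h) μ)
    (hint : Integrable (F h₀) μ)
    (hbound : Integrable bound μ)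
    (hF' : ∀ᵐ v ∂μ, ∀ h ∈ s, HasDerivWithinAt (fun h' => F h' v) (F' h v) s h)
    (hF'le : ∀ᵐ v ∂μ, ∀ h ∈ s, |F' h v| ≤ bound v) :
    HasDerivWithinAt (fun h => ∫ v, F h v ∂μ) (∫ v, F' h₀ v ∂μ) s h₀ := by
  classical
  have hlip : ∀ᵐ v ∂μ, ∀ h ∈ s, |F h v - F h₀ v| ≤ bound v * |h - h₀| := by
    filter_upwards [hF', hF'le] with v h1 h2 h hmem
    have := Convex.norm_image_sub_le_of_norm_hasDerivWithin_le
      (f := fun h' => F h' v) (f' := fun h => F' h v)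
      (fun x hx => h1 x hx) (fun x hx => by simpa [Real.norm_eq_abs] using h2 x hx)
      hs h₀s hmem
    simpa [Real.norm_eq_abs] using this
  have hFint : ∀ h ∈ s, Integrable (F h) μ := by
    intro h hmem
    refine (hint.norm.add (hbound.mul_const |h - h₀|)).mono' (hmeas h hmem) ?_
    filter_upwards [hlip] with v hv
    have := hv h hmem
    have h' : |F h v| ≤ |F h₀ v| + bound v * |h - h₀| := by
      calc |F h v| = |F h₀ v + (F h v - F h₀ v)| := by ring_nf
        _ ≤ |F h₀ v| + |F h v - F h₀ v| := abs_add_le _ _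
        _ ≤ |F h₀ v| + bound v * |h - h₀| := by linarith
    simpa [Real.norm_eq_abs] using h'
  rw [hasDerivWithinAt_iff_tendsto_slope]
  set l := nhdsWithin h₀ (s \ {h₀}) with hl
  have hev : ∀ᶠ h in l, h ∈ s \ {h₀} := self_mem_nhdsWithin
  have key : Filter.Tendsto (fun h => ∫ v, (F h v - F h₀ v) / (h - h₀) ∂μ) l
      (nhds (∫ v, F' h₀ v ∂μ)) := by
    apply tendsto_integral_filter_of_dominated_convergence (bound := bound)
    · filter_upwards [hev] with h hmem
      exact (((hFint h hmem.1).sub hint).div_const _).aestronglyMeasurable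
    · filter_upwards [hev] with h hmem
      filter_upwards [hlip] with v hv
      have hne : h - h₀ ≠ 0 := sub_ne_zero.mpr hmem.2
      rw [Real.norm_eq_abs, abs_div]
      rw [div_le_iff₀ (abs_pos.mpr hne)]
      exact hv h hmem.1
    · exact hbound
    · filter_upwards [hF'] with v hv
      have := (hv h₀ h₀s)
      rw [hasDerivWithinAt_iff_tendsto_slope] at this
      refine this.congr (fun h => ?_)
      simp [slope_def_field]
  refine key.congr' ?_
  filter_upwards [hev] with h hmem
  rw [slope_def_field, ← integral_sub (hFint h hmem.1) hint, ← integral_div]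

/-! ### Pointwise facts on the triangle -/

section facts
variable {α u h v : ℝ}

lemma pRad_add_eq (hh : h ≠ 0) : pRad α h + tE u h v + RRad α h = α ^ 2 / h + tE u h v := by
  rw [RRad, pRad]; field_simp; ring

lemma tE_mem (huh : u ≤ h) (hv0 : 0 ≤ v) (hv1 : v ≤ 1) :
    u ≤ tE u h v ∧ tE u h v ≤ h := by
  simp only [tE]
  constructor
  · nlinarith [mul_nonneg hv0 (sub_nonneg.mpr huh)]
  · nlinarith [mul_le_of_le_one_left (sub_nonneg.mpr huh) hv1]

lemma pRad_add_pos (hu : 0 < u) (huh : u ≤ h) (hv0 : 0 ≤ v) (hv1 : v ≤ 1) :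
    0 < pRad α h + tE u h v + RRad α h := by
  have hh : 0 < h := lt_of_lt_of_le hu huh
  rw [pRad_add_eq hh.ne']
  have := (tE_mem huh hv0 hv1).1
  have : 0 < tE u h v := lt_of_lt_of_le hu this
  positivity

lemma xE_eq (hh : h ≠ 0) : xE α u h v = (h - tE u h v) * (α ^ 2 / h + tE u h v) := by
  rw [xE, RRad, pRad]; field_simp; ring

lemma xE_nonneg (hu : 0 < u) (huh : u ≤ h) (hv0 : 0 ≤ v) (hv1 : v ≤ 1) :
    0 ≤ xE α u h v := by
  have hh : 0 < h := lt_of_lt_of_le hu huh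
  rw [xE_eq hh.ne']
  obtain ⟨h1, h2⟩ := tE_mem huh hv0 hv1
  have ht : 0 < tE u h v := lt_of_lt_of_le hu h1
  have : 0 < α ^ 2 / h + tE u h v := by positivity
  nlinarith

end facts

/-! ### The derivative of `GE` in `h` within the triangle -/

lemma hasDerivWithinAt_GE (α η : ℝ) (n : ℕ) {ε κ u v h : ℝ}
    (hε : 0 < ε) (hκ : 0 < κ)
    (hu : ε ≤ u) (hub : u ≤ 1 - κ)
    (hv0 : 0 ≤ v) (hv1 : v ≤ 1)
    (hh : h ∈ Set.Icc u (1 - κ)) :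
    HasDerivWithinAt (fun h' => GE α η n u h' v) (GdE α η n u h v) (Set.Icc u (1 - κ)) h := by
  have hu0 : 0 < u := lt_of_lt_of_le hε hu
  have hh0 : 0 < h := lt_of_lt_of_le hu0 hh.1
  have ht1 := (tE_mem hh.1 hv0 hv1).1
  have ht2 := (tE_mem hh.1 hv0 hv1).2
  have ht0 : 0 < tE u h v := lt_of_lt_of_le hu0 ht1
  have h1u : 0 < 1 - u := by linarith
  have ht : HasDerivAt (fun h' => tE u h' v) v h := by
    simp only [tE]
    simpa using (((hasDerivAt_id h).sub_const u).const_mul v).const_add u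
  have hp : HasDerivAt (fun h' => pRad α h') (pd α h) h := by
    have h1 : HasDerivAt (fun h' : ℝ => α ^ 2 + h' ^ 2) (2 * h) h := by
      simpa using (hasDerivAt_pow 2 h).const_add (α ^ 2)
    have h2 : HasDerivAt (fun h' : ℝ => 2 * h') 2 h := by
      simpa using (hasDerivAt_id h).const_mul 2
    have h3 := h1.div h2 (by positivity)
    refine h3.congr_deriv ?_
    rw [pd]; field_simp; ring
  have hR : HasDerivAt (fun h' => RRad α h') (pd α h - 1) h := by
    simp only [RRad]
    exact hp.sub (hasDerivAt_id h)
  have htR : HasDerivAt (fun h' => tE u h' v + RRad α h') (v + (pd α h - 1)) h := ht.add hR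
  have hx : HasDerivAt (fun h' => xE α u h' v) (xdE α u h v) h := by
    simp only [xE]
    refine ((hp.pow 2).sub (htR.pow 2)).congr_deriv ?_
    rw [xdE]; ring
  have hcos : HasDerivWithinAt (fun h' => cE α η u h' v) (cdE α η u h v) (Set.Icc u (1 - κ)) h := by
    have hmap : Set.MapsTo (fun h' => xE α u h' v) (Set.Icc u (1 - κ)) (Set.Ici 0) :=
      fun h' hh' => xE_nonneg hu0 hh'.1 hv0 hv1
    have houter := hasDerivWithinAt_cos_mul_sqrt η (y := xE α u h v) (xE_nonneg hu0 hh.1 hv0 hv1)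
    have := houter.comp h hx.hasDerivWithinAt hmap
    simp only [cE, cdE]
    exact this
  have harg : HasDerivAt (fun h' => aE u h' v) (adE u h v) h := by
    simp only [aE]
    refine (((ht.pow 2).const_sub ((1 - u) ^ 2 + 1)).div_const (2 * (1 - u))).congr_deriv ?_
    rw [adE]; ring
  have hT : HasDerivAt (fun h' => TEv n u h' v) (TdE n u h v) h := by
    simp only [TEv]
    exact (Polynomial.hasDerivAt _ _).comp h harg
  have hN : HasDerivWithinAt (fun h' => NE α η n u h' v) (NdE α η n u h v)
      (Set.Icc u (1 - κ)) h := by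
    simp only [NE]
    refine (((ht.hasDerivWithinAt.mul htR.hasDerivWithinAt).mul hcos).mul
      hT.hasDerivWithinAt).congr_deriv ?_
    rw [NdE]; simp only [Pi.mul_apply]; ring
  have harg1 : 0 < pRad α h + tE u h v + RRad α h := pRad_add_pos hu0 hh.1 hv0 hv1
  have harg2 : 0 < tE u h v + u := by linarith
  have harg3 : 0 < 2 + tE u h v - u := by linarith
  have harg4 : 0 < 2 - tE u h v - u := by
    have := hh.2; linarith
  have hs1 : HasDerivAt (fun h' => s1E α u h' v) (s1dE α u h v) h := by
    simp only [s1E]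
    have hinner : HasDerivAt (fun h' => pRad α h' + tE u h' v + RRad α h')
        (pd α h + v + (pd α h - 1)) h := (hp.add ht).add hR
    refine ((Real.hasDerivAt_sqrt harg1.ne').comp h hinner).congr_deriv ?_
    rw [s1dE, s1E]; ring
  have hs2 : HasDerivAt (fun h' => s2E u h' v) (s2dE u h v) h := by
    simp only [s2E]
    have hinner : HasDerivAt (fun h' => tE u h' v + u) v h := by
      simpa using ht.add_const u
    refine ((Real.hasDerivAt_sqrt harg2.ne').comp h hinner).congr_deriv ?_
    rw [s2dE, s2E]; ring
  have hs3 : HasDerivAt (fun h' => s3E u h' v) (s3dE u h v) h := by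
    simp only [s3E]
    have hinner : HasDerivAt (fun h' => 2 + tE u h' v - u) v h := by
      simpa using (ht.const_add 2).sub_const u
    refine ((Real.hasDerivAt_sqrt harg3.ne').comp h hinner).congr_deriv ?_
    rw [s3dE, s3E]; ring
  have hs4 : HasDerivAt (fun h' => s4E u h' v) (s4dE u h v) h := by
    simp only [s4E]
    have hinner : HasDerivAt (fun h' => 2 - tE u h' v - u) (-v) h := by
      simpa using (ht.const_sub 2).sub_const u
    refine ((Real.hasDerivAt_sqrt harg4.ne').comp h hinner).congr_deriv ?_
    rw [s4dE, s4E]; ring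
  have hD : HasDerivAt (fun h' => DE α u h' v) (DdE α u h v) h := by
    simp only [DE]
    refine (((hs1.mul hs2).mul hs3).mul hs4).congr_deriv ?_
    rw [DdE]; simp only [Pi.mul_apply]; ring
  have hDne : DE α u h v ≠ 0 := by
    rw [DE]
    have := Real.sqrt_pos.mpr harg1
    have := Real.sqrt_pos.mpr harg2
    have := Real.sqrt_pos.mpr harg3
    have := Real.sqrt_pos.mpr harg4
    rw [s1E, s2E, s3E, s4E]
    positivity
  simp only [GE]
  exact (hN.div hD.hasDerivWithinAt hDne).congr_deriv (by rw [GdE])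

/-! ### Compactness and continuity -/

def Kset (ε κ : ℝ) : Set (ℝ × ℝ × ℝ) :=
  {w | ε ≤ w.1 ∧ w.1 ≤ w.2.1 ∧ w.2.1 ≤ 1 - κ ∧ 0 ≤ w.2.2 ∧ w.2.2 ≤ 1}

lemma isCompact_Kset (ε κ : ℝ) : IsCompact (Kset ε κ) := by
  have hcl : IsClosed (Kset ε κ) := by
    have h1 : IsClosed {w : ℝ × ℝ × ℝ | ε ≤ w.1} := isClosed_le continuous_const continuous_fst
    have h2 : IsClosed {w : ℝ × ℝ × ℝ | w.1 ≤ w.2.1} :=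
      isClosed_le continuous_fst (continuous_fst.comp continuous_snd)
    have h3 : IsClosed {w : ℝ × ℝ × ℝ | w.2.1 ≤ 1 - κ} :=
      isClosed_le (continuous_fst.comp continuous_snd) continuous_const
    have h4 : IsClosed {w : ℝ × ℝ × ℝ | 0 ≤ w.2.2} :=
      isClosed_le continuous_const (continuous_snd.comp continuous_snd)
    have h5 : IsClosed {w : ℝ × ℝ × ℝ | w.2.2 ≤ 1} :=
      isClosed_le (continuous_snd.comp continuous_snd) continuous_const
    have : Kset ε κ =
        {w : ℝ × ℝ × ℝ | ε ≤ w.1} ∩ {w | w.1 ≤ w.2.1} ∩ {w | w.2.1 ≤ 1 - κ} ∩ {w | 0 ≤ w.2.2}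
          ∩ {w | w.2.2 ≤ 1} := by
      ext w; simp [Kset, Set.mem_inter_iff, and_assoc]
    rw [this]
    exact (((h1.inter h2).inter h3).inter h4).inter h5
  refine IsCompact.of_isClosed_subset (isCompact_Icc (a := ((ε,ε,0) : ℝ × ℝ × ℝ))
    (b := ((1-κ,1-κ,1) : ℝ × ℝ × ℝ))) hcl ?_
  rintro w ⟨h1, h2, h3, h4, h5⟩
  simp only [Set.mem_Icc, Prod.le_def]
  exact ⟨⟨h1, le_trans h1 h2, h4⟩, le_trans h2 h3, h3, h5⟩

lemma Kset_facts {α ε κ : ℝ} (hε : 0 < ε) (hκ : 0 < κ) {w : ℝ × ℝ × ℝ}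
    (hw : w ∈ Kset ε κ) :
    0 < w.1 ∧ 0 < w.2.1 ∧ 0 < 1 - w.1 ∧
    0 < pRad α w.2.1 + tE w.1 w.2.1 w.2.2 + RRad α w.2.1 ∧
    0 < tE w.1 w.2.1 w.2.2 + w.1 ∧
    0 < 2 + tE w.1 w.2.1 w.2.2 - w.1 ∧
    0 < 2 - tE w.1 w.2.1 w.2.2 - w.1 ∧
    0 ≤ xE α w.1 w.2.1 w.2.2 ∧
    0 < DE α w.1 w.2.1 w.2.2 := by
  obtain ⟨h1, h2, h3, h4, h5⟩ := hw
  have hu0 : 0 < w.1 := lt_of_lt_of_le hε h1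
  have hh0 : 0 < w.2.1 := lt_of_lt_of_le hu0 h2
  obtain ⟨ht1, ht2⟩ := tE_mem h2 h4 h5
  have harg1 := pRad_add_pos (α := α) hu0 h2 h4 h5
  have harg2 : 0 < tE w.1 w.2.1 w.2.2 + w.1 := by linarith
  have harg3 : 0 < 2 + tE w.1 w.2.1 w.2.2 - w.1 := by linarith
  have harg4 : 0 < 2 - tE w.1 w.2.1 w.2.2 - w.1 := by linarith
  have hD : 0 < DE α w.1 w.2.1 w.2.2 := by
    rw [DE, s1E, s2E, s3E, s4E]
    have := Real.sqrt_pos.mpr harg1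
    have := Real.sqrt_pos.mpr harg2
    have := Real.sqrt_pos.mpr harg3
    have := Real.sqrt_pos.mpr harg4
    positivity
  exact ⟨hu0, hh0, by linarith, harg1, harg2, harg3, harg4,
    xE_nonneg hu0 h2 h4 h5, hD⟩

lemma continuousOn_GE_GdE (α η : ℝ) (n : ℕ) {ε κ : ℝ} (hε : 0 < ε) (hκ : 0 < κ) :
    ContinuousOn (fun w : ℝ × ℝ × ℝ => GE α η n w.1 w.2.1 w.2.2) (Kset ε κ) ∧
    ContinuousOn (fun w : ℝ × ℝ × ℝ => GdE α η n w.1 w.2.1 w.2.2) (Kset ε κ) := by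
  set K := Kset ε κ
  have hKf : ∀ w ∈ K, 0 < w.1 ∧ 0 < w.2.1 ∧ 0 < 1 - w.1 ∧
      0 < pRad α w.2.1 + tE w.1 w.2.1 w.2.2 + RRad α w.2.1 ∧
      0 < tE w.1 w.2.1 w.2.2 + w.1 ∧
      0 < 2 + tE w.1 w.2.1 w.2.2 - w.1 ∧
      0 < 2 - tE w.1 w.2.1 w.2.2 - w.1 ∧
      0 ≤ xE α w.1 w.2.1 w.2.2 ∧
      0 < DE α w.1 w.2.1 w.2.2 := fun w hw => Kset_facts hε hκ hw
  have cu : Continuous (fun w : ℝ × ℝ × ℝ => w.1) := continuous_fst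
  have ch : Continuous (fun w : ℝ × ℝ × ℝ => w.2.1) := continuous_fst.comp continuous_snd
  have cv : Continuous (fun w : ℝ × ℝ × ℝ => w.2.2) := continuous_snd.comp continuous_snd
  have ct : Continuous (fun w : ℝ × ℝ × ℝ => tE w.1 w.2.1 w.2.2) := by
    simp only [tE]; fun_prop
  have cp : ContinuousOn (fun w : ℝ × ℝ × ℝ => pRad α w.2.1) K := by
    simp only [pRad]
    exact ContinuousOn.div (by fun_prop) (by fun_prop)
      (fun w hw => by have := (hKf w hw).2.1; positivity)
  have cpd : ContinuousOn (fun w : ℝ × ℝ × ℝ => pd α w.2.1) K := by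
    simp only [pd]
    exact ContinuousOn.div (by fun_prop) (by fun_prop)
      (fun w hw => by have := (hKf w hw).2.1; positivity)
  have cR : ContinuousOn (fun w : ℝ × ℝ × ℝ => RRad α w.2.1) K := by
    simp only [RRad]; exact cp.sub ch.continuousOn
  have cx : ContinuousOn (fun w : ℝ × ℝ × ℝ => xE α w.1 w.2.1 w.2.2) K := by
    simp only [xE]
    exact (cp.pow 2).sub ((ct.continuousOn.add cR).pow 2)
  have ccos : ContinuousOn (fun w : ℝ × ℝ × ℝ => cE α η w.1 w.2.1 w.2.2) K := by
    simp only [cE]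
    exact Real.continuous_cos.comp_continuousOn
      (continuousOn_const.mul (Real.continuous_sqrt.comp_continuousOn cx))
  have ccd0 : ContinuousOn (fun w : ℝ × ℝ × ℝ => cosDer η (xE α w.1 w.2.1 w.2.2)) K :=
    (continuousOn_cosDer η).comp cx (fun w hw => (hKf w hw).2.2.2.2.2.2.2.1)
  have cxd : ContinuousOn (fun w : ℝ × ℝ × ℝ => xdE α w.1 w.2.1 w.2.2) K := by
    simp only [xdE]
    exact ((continuousOn_const.mul cp).mul cpd).sub
      (((continuousOn_const.mul (ct.continuousOn.add cR))).mul
        (cv.continuousOn.add (cpd.sub continuousOn_const)))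
  have ccd : ContinuousOn (fun w : ℝ × ℝ × ℝ => cdE α η w.1 w.2.1 w.2.2) K := by
    simp only [cdE]; exact ccd0.mul cxd
  have ca : ContinuousOn (fun w : ℝ × ℝ × ℝ => aE w.1 w.2.1 w.2.2) K := by
    simp only [aE]
    refine ContinuousOn.div (by fun_prop) (by fun_prop)
      (fun w hw => by have := (hKf w hw).2.2.1; positivity)
  have cad : ContinuousOn (fun w : ℝ × ℝ × ℝ => adE w.1 w.2.1 w.2.2) K := by
    simp only [adE]
    refine ContinuousOn.div (by fun_prop) (by fun_prop)
      (fun w hw => by have := (hKf w hw).2.2.1; positivity)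
  have cT : ContinuousOn (fun w : ℝ × ℝ × ℝ => TEv n w.1 w.2.1 w.2.2) K := by
    simp only [TEv]
    exact (Chebyshev.T ℝ (n : ℤ)).continuous.comp_continuousOn ca
  have cTd : ContinuousOn (fun w : ℝ × ℝ × ℝ => TdE n w.1 w.2.1 w.2.2) K := by
    simp only [TdE]
    exact ((Polynomial.derivative (Chebyshev.T ℝ (n : ℤ))).continuous.comp_continuousOn ca).mul cad
  have cN : ContinuousOn (fun w : ℝ × ℝ × ℝ => NE α η n w.1 w.2.1 w.2.2) K := by
    simp only [NE]
    exact ((ct.continuousOn.mul (ct.continuousOn.add cR)).mul ccos).mul cT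
  have cNd : ContinuousOn (fun w : ℝ × ℝ × ℝ => NdE α η n w.1 w.2.1 w.2.2) K := by
    simp only [NdE]
    exact (((((cv.continuousOn.mul (ct.continuousOn.add cR)).mul ccos).mul cT).add
      (((ct.continuousOn.mul (cv.continuousOn.add (cpd.sub continuousOn_const))).mul ccos).mul cT)).add
      ((((ct.continuousOn.mul (ct.continuousOn.add cR)).mul ccd).mul cT))).add
      ((((ct.continuousOn.mul (ct.continuousOn.add cR)).mul ccos).mul cTd))
  have cs1 : ContinuousOn (fun w : ℝ × ℝ × ℝ => s1E α w.1 w.2.1 w.2.2) K := by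
    simp only [s1E]
    exact Real.continuous_sqrt.comp_continuousOn ((cp.add ct.continuousOn).add cR)
  have cs2 : ContinuousOn (fun w : ℝ × ℝ × ℝ => s2E w.1 w.2.1 w.2.2) K := by
    simp only [s2E]; fun_prop
  have cs3 : ContinuousOn (fun w : ℝ × ℝ × ℝ => s3E w.1 w.2.1 w.2.2) K := by
    simp only [s3E]; fun_prop
  have cs4 : ContinuousOn (fun w : ℝ × ℝ × ℝ => s4E w.1 w.2.1 w.2.2) K := by
    simp only [s4E]; fun_prop
  have hs1pos : ∀ w ∈ K, 0 < s1E α w.1 w.2.1 w.2.2 := fun w hw => by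
    rw [s1E]; exact Real.sqrt_pos.mpr (hKf w hw).2.2.2.1
  have hs2pos : ∀ w ∈ K, 0 < s2E w.1 w.2.1 w.2.2 := fun w hw => by
    rw [s2E]; exact Real.sqrt_pos.mpr (hKf w hw).2.2.2.2.1
  have hs3pos : ∀ w ∈ K, 0 < s3E w.1 w.2.1 w.2.2 := fun w hw => by
    rw [s3E]; exact Real.sqrt_pos.mpr (hKf w hw).2.2.2.2.2.1
  have hs4pos : ∀ w ∈ K, 0 < s4E w.1 w.2.1 w.2.2 := fun w hw => by
    rw [s4E]; exact Real.sqrt_pos.mpr (hKf w hw).2.2.2.2.2.2.1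
  have cs1d : ContinuousOn (fun w : ℝ × ℝ × ℝ => s1dE α w.1 w.2.1 w.2.2) K := by
    simp only [s1dE]
    exact ContinuousOn.div ((cpd.add cv.continuousOn).add (cpd.sub continuousOn_const))
      (continuousOn_const.mul cs1) (fun w hw => by have := hs1pos w hw; positivity)
  have cs2d : ContinuousOn (fun w : ℝ × ℝ × ℝ => s2dE w.1 w.2.1 w.2.2) K := by
    simp only [s2dE]
    exact ContinuousOn.div cv.continuousOn (continuousOn_const.mul cs2)
      (fun w hw => by have := hs2pos w hw; positivity)
  have cs3d : ContinuousOn (fun w : ℝ × ℝ × ℝ => s3dE w.1 w.2.1 w.2.2) K := by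
    simp only [s3dE]
    exact ContinuousOn.div cv.continuousOn (continuousOn_const.mul cs3)
      (fun w hw => by have := hs3pos w hw; positivity)
  have cs4d : ContinuousOn (fun w : ℝ × ℝ × ℝ => s4dE w.1 w.2.1 w.2.2) K := by
    simp only [s4dE]
    exact ContinuousOn.div cv.continuousOn.neg (continuousOn_const.mul cs4)
      (fun w hw => by have := hs4pos w hw; positivity)
  have cD : ContinuousOn (fun w : ℝ × ℝ × ℝ => DE α w.1 w.2.1 w.2.2) K := by
    simp only [DE]
    exact ((cs1.mul cs2).mul cs3).mul cs4
  have cDd : ContinuousOn (fun w : ℝ × ℝ × ℝ => DdE α w.1 w.2.1 w.2.2) K := by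
    simp only [DdE]
    exact (((((cs1d.mul cs2).mul cs3).mul cs4).add
      (((cs1.mul cs2d).mul cs3).mul cs4)).add
      ((((cs1.mul cs2).mul cs3d).mul cs4))).add
      ((((cs1.mul cs2).mul cs3).mul cs4d))
  have hDne : ∀ w ∈ K, DE α w.1 w.2.1 w.2.2 ≠ 0 :=
    fun w hw => ((hKf w hw).2.2.2.2.2.2.2.2).ne'
  constructor
  · simp only [GE]
    exact cN.div cD hDne
  · simp only [GdE]
    exact ContinuousOn.div ((cNd.mul cD).sub (cN.mul cDd)) (cD.pow 2)
      (fun w hw => pow_ne_zero 2 (hDne w hw))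

/-! ### Integrability of the weight -/

lemma wE_nonneg (v : ℝ) : 0 ≤ wE v := by rw [wE]; positivity

lemma measurable_wE : Measurable wE := by
  apply Measurable.inv
  exact (Real.continuous_sqrt.measurable).mul
    (Real.continuous_sqrt.measurable.comp (measurable_const.sub measurable_id))

lemma integrable_inv_sqrt : IntegrableOn (fun v : ℝ => (Real.sqrt v)⁻¹) (Set.Ioo 0 1) := by
  have h1 : IntervalIntegrable (fun x : ℝ => x ^ (-(1/2) : ℝ)) volume 0 1 :=
    intervalIntegral.intervalIntegrable_rpow' (by norm_num)
  rw [intervalIntegrable_iff, Set.uIoc_of_le (by norm_num : (0:ℝ) ≤ 1)] at h1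
  refine (h1.mono_set Set.Ioo_subset_Ioc_self).congr ?_
  filter_upwards [ae_restrict_mem measurableSet_Ioo] with v hv
  rw [Real.sqrt_eq_rpow, ← Real.rpow_neg hv.1.le]

lemma integrable_inv_sqrt' : IntegrableOn (fun v : ℝ => (Real.sqrt (1 - v))⁻¹) (Set.Ioo 0 1) := by
  have h1 : IntervalIntegrable (fun x : ℝ => x ^ (-(1/2) : ℝ)) volume 0 1 :=
    intervalIntegral.intervalIntegrable_rpow' (by norm_num)
  have h2 := (h1.comp_sub_left 1).symm
  norm_num at h2
  rw [intervalIntegrable_iff, Set.uIoc_of_le (by norm_num : (0:ℝ) ≤ 1)] at h2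
  refine (h2.mono_set Set.Ioo_subset_Ioc_self).congr ?_
  filter_upwards [ae_restrict_mem measurableSet_Ioo] with v hv
  have hv1 : (0:ℝ) < 1 - v := by linarith [hv.2]
  rw [Real.sqrt_eq_rpow, ← Real.rpow_neg hv1.le]

lemma integrable_wE : IntegrableOn wE (Set.Ioo 0 1) := by
  refine ((integrable_inv_sqrt.const_mul (Real.sqrt 2)).add
    (integrable_inv_sqrt'.const_mul (Real.sqrt 2))).mono'
    measurable_wE.aestronglyMeasurable ?_
  filter_upwards [ae_restrict_mem measurableSet_Ioo] with v hv
  have hv0 : (0:ℝ) < v := hv.1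
  have hv1 : (0:ℝ) < 1 - v := by linarith [hv.2]
  rw [Real.norm_eq_abs, abs_of_nonneg (wE_nonneg v), wE, mul_inv]
  simp only [Pi.add_apply]
  have key : ∀ a c : ℝ, 0 < a → (1:ℝ)/2 ≤ c → (Real.sqrt c)⁻¹ ≤ Real.sqrt 2 := by
    intro a c ha hc
    rw [show (2:ℝ) = ((1:ℝ)/2)⁻¹ by norm_num, Real.sqrt_inv]
    exact inv_anti₀ (Real.sqrt_pos.mpr (by norm_num)) (Real.sqrt_le_sqrt hc)
  rcases le_total v (1/2) with hc | hc
  · have h1 : (Real.sqrt (1 - v))⁻¹ ≤ Real.sqrt 2 := key v (1 - v) hv0 (by linarith)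
    have h2 : 0 ≤ (Real.sqrt v)⁻¹ := by positivity
    have h3 : 0 ≤ Real.sqrt 2 * (Real.sqrt (1 - v))⁻¹ := by positivity
    nlinarith [mul_le_mul_of_nonneg_left h1 h2, mul_comm (Real.sqrt v)⁻¹ (Real.sqrt 2)]
  · have h1 : (Real.sqrt v)⁻¹ ≤ Real.sqrt 2 := key v v hv0 (by linarith)
    have h2 : 0 ≤ (Real.sqrt (1 - v))⁻¹ := by positivity
    have h3 : 0 ≤ Real.sqrt 2 * (Real.sqrt v)⁻¹ := by positivity
    nlinarith [mul_le_mul_of_nonneg_left h1 h2, mul_comm (Real.sqrt (1-v))⁻¹ (Real.sqrt 2)]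

/-! ### Main theorem -/

attribute [irreducible] GE GdE volterraK

set_option maxHeartbeats 1000000 in
/-- On the triangle `T = {(h,u) : ε ≤ u ≤ h ≤ 1−κ}`, the Volterra kernel `K_n(η; ·, ·)` is
bounded, differentiable in `h`, and has bounded first derivative in `h`. -/
theorem volterraK_bounded_with_bounded_deriv
    (α ε κ : ℝ) (hα : 0 < α) (hε : ε ∈ Set.Ioo (0 : ℝ) 1) (hκ : κ ∈ Set.Ioo 0 (1 - ε))
    (n : ℕ) (η : ℝ) :
    ∃ C > (0 : ℝ), ∃ K' : ℝ → ℝ → ℝ,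
      ∀ u ∈ Set.Icc ε (1 - κ), ∀ h ∈ Set.Icc u (1 - κ),
        |volterraK α n η h u| ≤ C ∧
        HasDerivWithinAt (fun h' => volterraK α n η h' u) (K' h u)
          (Set.Icc u (1 - κ)) h ∧
        |K' h u| ≤ C := by
  obtain ⟨hε0, hε1⟩ := hε
  obtain ⟨hκ0, hκ1⟩ := hκ
  obtain ⟨cG, cGd⟩ := continuousOn_GE_GdE α η n (ε := ε) (κ := κ) hε0 hκ0
  obtain ⟨M1, hM1⟩ := (isCompact_Kset ε κ).exists_bound_of_continuousOn cG
  obtain ⟨M2, hM2⟩ := (isCompact_Kset ε κ).exists_bound_of_continuousOn cGd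
  set M := max M1 M2 with hMdef
  have hw0 : ((ε, ε, 0) : ℝ × ℝ × ℝ) ∈ Kset ε κ :=
    ⟨le_refl _, le_refl _, by linarith, le_refl _, zero_le_one⟩
  have hM0 : 0 ≤ M := le_trans (norm_nonneg _) (le_trans (hM1 _ hw0) (le_max_left _ _))
  have hMG : ∀ w ∈ Kset ε κ, |GE α η n w.1 w.2.1 w.2.2| ≤ M := fun w hw => by
    have := hM1 w hw; rw [Real.norm_eq_abs] at this; exact le_trans this (le_max_left _ _)
  have hMGd : ∀ w ∈ Kset ε κ, |GdE α η n w.1 w.2.1 w.2.2| ≤ M := fun w hw => by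
    have := hM2 w hw; rw [Real.norm_eq_abs] at this; exact le_trans this (le_max_right _ _)
  set W := ∫ v in Set.Ioo (0:ℝ) 1, wE v with hWdef
  have hW0 : 0 ≤ W := setIntegral_nonneg measurableSet_Ioo (fun v _ => wE_nonneg v)
  refine ⟨2 * M * W + 1, by positivity,
    fun h u => 2 * (1 - u) * ∫ v in Set.Ioo (0:ℝ) 1, GdE α η n u h v * wE v, ?_⟩
  intro u hu h hh
  have hue : ε ≤ u := hu.1
  have hub : u ≤ 1 - κ := hu.2
  have hu1 : 0 < 1 - u := by linarith
  have h2u : |2 * (1 - u)| ≤ 2 := by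
    rw [abs_of_nonneg (by linarith)]; linarith
  have hKmem : ∀ h' ∈ Set.Icc u (1 - κ), ∀ v ∈ Set.Icc (0:ℝ) 1,
      ((u, h', v) : ℝ × ℝ × ℝ) ∈ Kset ε κ := by
    intro h' hh' v hv
    exact ⟨hue, hh'.1, hh'.2, hv.1, hv.2⟩
  -- measurability
  have hmeasG : ∀ h' ∈ Set.Icc u (1 - κ),
      AEStronglyMeasurable (fun v => GE α η n u h' v * wE v)
        (volume.restrict (Set.Ioo 0 1)) := by
    intro h' hh'
    refine AEStronglyMeasurable.mul ?_ measurable_wE.aestronglyMeasurable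
    have hcont : ContinuousOn (fun v => GE α η n u h' v) (Set.Icc 0 1) := by
      have hcomp : Continuous (fun v : ℝ => ((u, h', v) : ℝ × ℝ × ℝ)) := by fun_prop
      have h0 := cG.comp hcomp.continuousOn (fun v hv => hKmem h' hh' v hv)
      simpa only [Function.comp_def] using h0
    exact (hcont.mono Set.Ioo_subset_Icc_self).aestronglyMeasurable measurableSet_Ioo
  have hmeasGd : ∀ h' ∈ Set.Icc u (1 - κ),
      AEStronglyMeasurable (fun v => GdE α η n u h' v * wE v)
        (volume.restrict (Set.Ioo 0 1)) := by
    intro h' hh'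
    refine AEStronglyMeasurable.mul ?_ measurable_wE.aestronglyMeasurable
    have hcont : ContinuousOn (fun v => GdE α η n u h' v) (Set.Icc 0 1) := by
      have hcomp : Continuous (fun v : ℝ => ((u, h', v) : ℝ × ℝ × ℝ)) := by fun_prop
      have h0 := cGd.comp hcomp.continuousOn (fun v hv => hKmem h' hh' v hv)
      simpa only [Function.comp_def] using h0
    exact (hcont.mono Set.Ioo_subset_Icc_self).aestronglyMeasurable measurableSet_Ioo
  -- pointwise bounds
  have hboundG : ∀ h' ∈ Set.Icc u (1 - κ), ∀ᵐ v ∂(volume.restrict (Set.Ioo (0:ℝ) 1)),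
      ‖GE α η n u h' v * wE v‖ ≤ M * wE v := by
    intro h' hh'
    filter_upwards [ae_restrict_mem measurableSet_Ioo] with v hv
    rw [Real.norm_eq_abs, abs_mul, abs_of_nonneg (wE_nonneg v)]
    exact mul_le_mul_of_nonneg_right
      (hMG _ (hKmem h' hh' v ⟨hv.1.le, hv.2.le⟩)) (wE_nonneg v)
  have hboundGd : ∀ h' ∈ Set.Icc u (1 - κ), ∀ᵐ v ∂(volume.restrict (Set.Ioo (0:ℝ) 1)),
      ‖GdE α η n u h' v * wE v‖ ≤ M * wE v := by
    intro h' hh'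
    filter_upwards [ae_restrict_mem measurableSet_Ioo] with v hv
    rw [Real.norm_eq_abs, abs_mul, abs_of_nonneg (wE_nonneg v)]
    exact mul_le_mul_of_nonneg_right
      (hMGd _ (hKmem h' hh' v ⟨hv.1.le, hv.2.le⟩)) (wE_nonneg v)
  have hMw : Integrable (fun v => M * wE v) (volume.restrict (Set.Ioo (0:ℝ) 1)) :=
    integrable_wE.const_mul M
  have hintG : ∀ h' ∈ Set.Icc u (1 - κ),
      Integrable (fun v => GE α η n u h' v * wE v) (volume.restrict (Set.Ioo (0:ℝ) 1)) :=
    fun h' hh' => hMw.mono' (hmeasG h' hh') (hboundG h' hh')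
  -- rewriting volterraK
  have hVK : (fun h' => volterraK α n η h' u)
      = fun h' => 2 * (1 - u) * ∫ v in Set.Ioo (0:ℝ) 1, GE α η n u h' v * wE v := by
    funext h'
    rw [volterraK]
    congr 1
    refine integral_congr_ae (Filter.Eventually.of_forall fun v => ?_)
    simp only [GE, NE, DE, cE, TEv, aE, xE, tE, s1E, s2E, s3E, s4E, wE]
    ring
  -- the three goals
  have hIb : ∀ h' ∈ Set.Icc u (1 - κ),
      |∫ v in Set.Ioo (0:ℝ) 1, GE α η n u h' v * wE v| ≤ M * W := by
    intro h' hh'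
    have hnorm := norm_integral_le_of_norm_le hMw (hboundG h' hh')
    rw [Real.norm_eq_abs] at hnorm
    calc |∫ v in Set.Ioo (0:ℝ) 1, GE α η n u h' v * wE v|
        ≤ ∫ v in Set.Ioo (0:ℝ) 1, M * wE v := hnorm
      _ = M * W := by rw [hWdef, integral_const_mul]
  have hIbd : |∫ v in Set.Ioo (0:ℝ) 1, GdE α η n u h v * wE v| ≤ M * W := by
    have hnorm := norm_integral_le_of_norm_le hMw (hboundGd h hh)
    rw [Real.norm_eq_abs] at hnorm
    calc |∫ v in Set.Ioo (0:ℝ) 1, GdE α η n u h v * wE v|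
        ≤ ∫ v in Set.Ioo (0:ℝ) 1, M * wE v := hnorm
      _ = M * W := by rw [hWdef, integral_const_mul]
  refine ⟨?_, ?_, ?_⟩
  · rw [congrFun hVK h, abs_mul]
    have := mul_le_mul h2u (hIb h hh) (abs_nonneg _) (by norm_num)
    nlinarith [mul_nonneg hM0 hW0]
  · rw [hVK]
    refine HasDerivWithinAt.const_mul (2 * (1 - u)) ?_
    refine hasDerivWithinAt_integral_of_dominated (F' := fun h' v => GdE α η n u h' v * wE v)
      (convex_Icc u (1 - κ)) hh
      hmeasG (hintG h hh) hMw ?_ ?_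
    · filter_upwards [ae_restrict_mem measurableSet_Ioo] with v hv h' hh'
      exact (hasDerivWithinAt_GE α η n hε0 hκ0 hue hub hv.1.le hv.2.le hh').mul_const (wE v)
    · filter_upwards [ae_restrict_mem measurableSet_Ioo] with v hv h' hh'
      rw [abs_mul, abs_of_nonneg (wE_nonneg v)]
      exact mul_le_mul_of_nonneg_right
        (hMGd _ (hKmem h' hh' v ⟨hv.1.le, hv.2.le⟩)) (wE_nonneg v)
  · rw [abs_mul]
    have := mul_le_mul h2u hIbd (abs_nonneg _) (by norm_num)
    nlinarith [mul_nonneg hM0 hW0]
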